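/- For k ≥ 2, in the cycle C_m with m ≥ k+2, every k-tuple of vertices inducing a connected subgraph has, for each index j ∈ [k], exactly two local j-neighbors in V^k (corresponding to the two neighbors of the j-th vertex), and the number of these local j-neighbors that again induce a connected subgraph depends only on the isomorphism type of the labeled induced subgraph of the tuple. -/

import Mathlib

open SimpleGraph Function

/-- A tuple induces a connected subgraph. -/
def InducesConnected {V : Type*} (G : SimpleGraph V) {m : ℕ} (v : Fin m → V) : Prop :=
  (G.induce (Set.range v)).Connected

/-- Two `k`-tuples have the same isomorphism (atomic) type: the map `v i ↦ w i`
preserves equalities and adjacencies of entries (i.e. induces an isomorphism of the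
labeled induced subgraphs). -/
def SameAtomicType {V W : Type*} (G : SimpleGraph V) (H : SimpleGraph W) {k : ℕ}
    (v : Fin k → V) (w : Fin k → W) : Prop :=
  ∀ i j : Fin k, (v i = v j ↔ w i = w j) ∧ (G.Adj (v i) (v j) ↔ H.Adj (w i) (w j))

set_option linter.unusedSectionVars false
open Fin.NatCast Fin.CommRing
section Aux
variable {m : ℕ} [NeZero m]

lemma subVal (u v : Fin m) :
    (u - v).val = if v.val ≤ u.val then u.val - v.val else u.val + m - v.val := by
  have hu := u.isLt; have hv := v.isLt
  have : (u - v).val = (m - v.val + u.val) % m := by rw [Fin.sub_def]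
  rw [this]
  split
  · have h2 : m - v.val + u.val = (u.val - v.val) + m := by omega
    rw [h2, Nat.add_mod_right, Nat.mod_eq_of_lt (by omega)]
  · rw [Nat.mod_eq_of_lt (by omega)]; omega

lemma subVal_eq_one (hM : 4 ≤ m) (u v : Fin m) :
    (u - v).val = 1 ↔ (u.val = v.val + 1 ∨ (u.val = 0 ∧ v.val = m - 1)) := by
  have hu := u.isLt; have hv := v.isLt
  rw [subVal]; split <;> omega

/-- distance coordinate -/
def D (a x : Fin m) : ℕ := (x - a).val

lemma D_lt (a x : Fin m) : D a x < m := (x - a).isLt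

lemma D_inj {a x y : Fin m} (h : D a x = D a y) : x = y := by
  have : x - a = y - a := Fin.ext h
  exact sub_left_injective this

lemma D_cast {a : Fin m} {i : ℕ} (hi : i < m) : D a (a + (i : ℕ)) = i := by
  unfold D
  rw [add_sub_cancel_left, Fin.val_cast_of_lt hi]

lemma eq_add_cast_D (a x : Fin m) : x = a + ((D a x : ℕ) : Fin m) := by
  unfold D
  rw [Fin.cast_val_eq_self, add_sub_cancel]

lemma adj_iff_D (hM : 4 ≤ m) (a x y : Fin m) :
    (cycleGraph m).Adj x y ↔
      (D a x = D a y + 1 ∨ D a y = D a x + 1 ∨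
       (D a x = 0 ∧ D a y = m - 1) ∨ (D a y = 0 ∧ D a x = m - 1)) := by
  have h1 : x - y = (x - a) - (y - a) := by ring
  have h2 : y - x = (y - a) - (x - a) := by ring
  rw [cycleGraph_adj', h1, h2, subVal_eq_one hM, subVal_eq_one hM]
  unfold D; omega

end Aux

section Conn
variable {V : Type*} {G : SimpleGraph V}

lemma no_crossing {S : Set V} (h : (G.induce S).Connected) (P : V → Prop)
    (hadj : ∀ x ∈ S, ∀ y ∈ S, G.Adj x y → (P x ↔ P y))
    {x y : V} (hx : x ∈ S) (hy : y ∈ S) (hPx : P x) (hPy : ¬ P y) : False := by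
  have key : ∀ (u v : S) (_ : (G.induce S).Walk u v), P u.1 → P v.1 := by
    intro u v w
    induction w with
    | nil => exact id
    | cons hadj' p ih =>
      intro hu
      exact ih ((hadj _ (by exact Subtype.coe_prop _) _ (by exact Subtype.coe_prop _)
        hadj').mp hu)
  obtain ⟨w⟩ := h.preconnected ⟨x, hx⟩ ⟨y, hy⟩
  exact hPy (key _ _ w hPx)

lemma induce_singleton_connected (a : V) : (G.induce {a}).Connected := by
  rw [connected_iff]
  refine ⟨fun u v => ?_, ⟨⟨a, rfl⟩⟩⟩
  have : u = v := Subtype.ext (by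
    have hu := u.2; have hv := v.2
    simp only [Set.mem_singleton_iff] at hu hv; rw [hu, hv])
  rw [this]

end Conn

section Ival
variable {m : ℕ} [NeZero m]

/-- interval of length t starting at a -/
def Ival (a : Fin m) (t : ℕ) : Set (Fin m) := {x | D a x < t}

lemma mem_Ival_iff {a x : Fin m} {t : ℕ} : x ∈ Ival a t ↔ D a x < t := Iff.rfl

lemma D_self (a : Fin m) : D a a = 0 := by unfold D; rw [sub_self]; rfl

lemma Ival_one (a : Fin m) : Ival a 1 = {a} := by
  ext x
  simp only [mem_Ival_iff, Set.mem_singleton_iff, Nat.lt_one_iff]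
  constructor
  · intro h; exact D_inj (h.trans (D_self a).symm)
  · rintro rfl; exact D_self _

lemma Ival_succ (a : Fin m) {t : ℕ} (ht : t < m) :
    Ival a (t + 1) = Ival a t ∪ {a + (t : ℕ)} := by
  ext x
  simp only [mem_Ival_iff, Set.mem_union, Set.mem_singleton_iff]
  constructor
  · intro h
    rcases Nat.lt_or_ge (D a x) t with h' | h'
    · exact Or.inl h'
    · right
      have h1 : D a x = t := by omega
      have h2 : D a (a + (t : ℕ)) = t := D_cast ht
      exact D_inj (a := a) (by rw [h1, h2])
  · rintro (h | rfl)
    · omega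
    · rw [D_cast ht]; omega

lemma Ival_connected (hM : 4 ≤ m) (a : Fin m) :
    ∀ t : ℕ, 1 ≤ t → t ≤ m → ((cycleGraph m).induce (Ival a t)).Connected := by
  intro t
  induction t with
  | zero => omega
  | succ t ih =>
    intro _ hle
    rcases Nat.eq_zero_or_pos t with rfl | ht
    · rw [Ival_one]; exact induce_singleton_connected a
    · rw [Ival_succ a (by omega)]
      refine connected_induce_union (ih ht (by omega)).preconnected (induce_singleton_connected _).preconnected
        (v := a + ((t - 1 : ℕ) : Fin m)) (w := a + (t : ℕ))
        ?_ rfl ?_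
      · rw [mem_Ival_iff, D_cast (by omega)]; omega
      · rw [adj_iff_D hM a, D_cast (by omega : t - 1 < m), D_cast (by omega : t < m)]
        omega

end Ival

section Struct
variable {m : ℕ} [NeZero m]

lemma neg_one_val (hM : 4 ≤ m) : ((m - 1 : ℕ) : Fin m) = -1 := by
  have h : ((m - 1 : ℕ) : Fin m) + 1 = 0 := by
    have : ((m - 1 : ℕ) : Fin m) + ((1 : ℕ) : Fin m) = (((m - 1) + 1 : ℕ) : Fin m) := by
      rw [Nat.cast_add]
    rw [Nat.cast_one] at this
    rw [this, (by omega : m - 1 + 1 = m), Fin.natCast_self]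
  linear_combination h

lemma structure_lemma (hM : 4 ≤ m) {S : Set (Fin m)}
    (hconn : ((cycleGraph m).induce S).Connected) (hcard : S.ncard < m) :
    ∃ a, S = Ival a S.ncard := by
  classical
  obtain ⟨⟨x0, hx0⟩⟩ := hconn.nonempty
  -- find a vertex not in S
  have hSne : S ≠ Set.univ := by
    intro h
    rw [h, Set.ncard_univ, Nat.card_eq_fintype_card, Fintype.card_fin] at hcard
    omega
  obtain ⟨z, hz⟩ : ∃ z, z ∉ S := by
    by_contra h
    push_neg at h
    exact hSne (Set.eq_univ_iff_forall.mpr h)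
  set b := z + 1 with hb
  set g : Fin m → ℕ := D b with hg
  have hgz : g z = m - 1 := by
    show (z - (z + 1)).val = m - 1
    have : z - (z + 1) = -1 := by ring
    rw [this, ← neg_one_val hM, Fin.val_cast_of_lt (by omega)]
  have hglt : ∀ x, g x < m := fun x => D_lt b x
  have hgS : ∀ x ∈ S, g x < m - 1 := by
    intro x hx
    rcases Nat.lt_or_ge (g x) (m - 1) with h | h
    · exact h
    · exfalso
      have hxz : g x = g z := by rw [hgz]; have := hglt x; omega
      exact hz ((D_inj (a := b) hxz) ▸ hx)
  have hadjS : ∀ x ∈ S, ∀ y ∈ S, (cycleGraph m).Adj x y ↔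
      (g x = g y + 1 ∨ g y = g x + 1) := by
    intro x hx y hy
    have h1 := hgS x hx; have h2 := hgS y hy
    rw [adj_iff_D hM b]
    simp only [hg] at h1 h2 ⊢
    omega
  -- the image of S under g
  set GS : Set ℕ := g '' S with hGS
  have hGSne : GS.Nonempty := ⟨g x0, x0, hx0, rfl⟩
  have hGSfin : GS.Finite := (S.toFinite).image g
  set a0 := sInf GS with ha0
  set b0 := sSup GS with hb0
  have ha0m : a0 ∈ GS := Nat.sInf_mem hGSne
  have hb0m : b0 ∈ GS := hGSne.csSup_mem hGSfin
  have hle : ∀ c ∈ GS, a0 ≤ c ∧ c ≤ b0 := fun c hc =>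
    ⟨Nat.sInf_le hc, le_csSup hGSfin.bddAbove hc⟩
  -- connectivity forces the image to be a full interval
  have hfull : ∀ c, a0 ≤ c → c ≤ b0 → c ∈ GS := by
    intro c hc1 hc2
    by_contra hc
    obtain ⟨xa, hxa, hxa'⟩ := ha0m
    obtain ⟨xb, hxb, hxb'⟩ := hb0m
    refine no_crossing hconn (fun x => g x < c) ?_ hxa hxb ?_ ?_
    · intro x hx y hy hxy
      have h := (hadjS x hx y hy).mp hxy
      have h1 : g x ≠ c := fun h' => hc (h' ▸ ⟨x, hx, rfl⟩)
      have h2 : g y ≠ c := fun h' => hc (h' ▸ ⟨y, hy, rfl⟩)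
      omega
    · have : g xa ≠ c := fun h' => hc (h' ▸ ⟨xa, hxa, rfl⟩)
      omega
    · have : g xb ≠ c := fun h' => hc (h' ▸ ⟨xb, hxb, rfl⟩)
      omega
  have hGSeq : GS = Set.Icc a0 b0 := by
    ext c
    exact ⟨fun hc => ⟨(hle c hc).1, (hle c hc).2⟩, fun hc => hfull c hc.1 hc.2⟩
  -- cardinality
  have hginj : Set.InjOn g S := fun x _ y _ h => D_inj h
  have hcardGS : GS.ncard = S.ncard := Set.ncard_image_of_injOn hginj
  have hIcc : (Set.Icc a0 b0).ncard = b0 + 1 - a0 := by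
    rw [← Finset.coe_Icc, Set.ncard_coe_finset, Nat.card_Icc]
  have hb0eq : b0 + 1 = a0 + S.ncard := by
    have h1 := hle a0 ha0m
    rw [hGSeq] at hcardGS
    rw [hIcc] at hcardGS
    have : S.ncard ≠ 0 := by
      rw [← hcardGS]; omega
    omega
  have hb0small : b0 < m - 1 := by
    obtain ⟨xb, hxb, hxb'⟩ := hb0m
    rw [← hxb']; exact hgS xb hxb
  -- now define the start of the interval
  refine ⟨b + ((a0 : ℕ) : Fin m), ?_⟩
  have ha0lt : a0 < m := by omega
  have key : ∀ x : Fin m, D (b + ((a0 : ℕ) : Fin m)) x =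
      if a0 ≤ g x then g x - a0 else g x + m - a0 := by
    intro x
    show (x - (b + ((a0 : ℕ) : Fin m))).val = _
    have h1 : x - (b + ((a0 : ℕ) : Fin m)) = (x - b) - ((a0 : ℕ) : Fin m) := by ring
    rw [h1, subVal, Fin.val_cast_of_lt ha0lt]
    rfl
  ext x
  rw [mem_Ival_iff, key x]
  constructor
  · intro hx
    have hgx := hle (g x) ⟨x, hx, rfl⟩
    rw [if_pos hgx.1]
    omega
  · intro hx
    have hglt := hglt x
    by_cases hc : a0 ≤ g x
    · rw [if_pos hc] at hx
      have : g x ∈ GS := hfull (g x) hc (by omega)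
      obtain ⟨y, hy, hy'⟩ := this
      exact (D_inj (a := b) hy') ▸ hy
    · rw [if_neg hc] at hx
      omega

end Struct

section Helpers
variable {m : ℕ} [NeZero m]

lemma val_one_of (hM : 4 ≤ m) : (1 : Fin m).val = 1 := by
  rw [Fin.val_one']
  exact Nat.mod_eq_of_lt (by omega)

lemma adj_pair (hM : 4 ≤ m) (u x : Fin m) :
    (cycleGraph m).Adj u x ↔ x = u - 1 ∨ x = u + 1 := by
  rw [cycleGraph_adj']
  have e1 : (u - x).val = 1 ↔ u - x = 1 := by
    rw [Fin.ext_iff, val_one_of hM]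
  have e2 : (x - u).val = 1 ↔ x - u = 1 := by
    rw [Fin.ext_iff, val_one_of hM]
  rw [e1, e2]
  constructor
  · rintro (h | h)
    · left; linear_combination -h
    · right; linear_combination h
  · rintro (h | h)
    · left; rw [h]; ring
    · right; rw [h]; ring

lemma sub_one_ne_add_one (hM : 4 ≤ m) (u : Fin m) : u - 1 ≠ u + 1 := by
  intro h
  have h2 : (2 : Fin m) = 0 := by linear_combination -h
  have : ((2 : ℕ) : Fin m).val = 0 := by
    rw [Nat.cast_ofNat, h2]; rfl
  rw [Fin.val_cast_of_lt (by omega)] at this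
  omega

lemma nbr_set_eq (hM : 4 ≤ m) (u : Fin m) :
    {x : Fin m | (cycleGraph m).Adj u x} = {u - 1, u + 1} := by
  ext x
  rw [Set.mem_setOf_eq, adj_pair hM, Set.mem_insert_iff, Set.mem_singleton_iff]

lemma nbr_ncard (hM : 4 ≤ m) (u : Fin m) :
    Set.ncard {x : Fin m | (cycleGraph m).Adj u x} = 2 := by
  rw [nbr_set_eq hM, Set.ncard_pair (sub_one_ne_add_one hM u)]

end Helpers

section RangeUpdate
variable {α β : Type*} [DecidableEq α]

lemma range_update_eq (v : α → β) (j : α) (x : β) :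
    Set.range (Function.update v j x) = insert x (v '' {i | i ≠ j}) := by
  ext y
  simp only [Set.mem_range, Set.mem_insert_iff, Set.mem_image, Set.mem_setOf_eq]
  constructor
  · rintro ⟨i, rfl⟩
    by_cases hij : i = j
    · subst hij; rw [Function.update_self]; exact Or.inl rfl
    · rw [Function.update_of_ne hij]; exact Or.inr ⟨i, hij, rfl⟩
  · rintro (rfl | ⟨i, hij, rfl⟩)
    · exact ⟨j, Function.update_self j y v⟩
    · exact ⟨i, Function.update_of_ne hij x v⟩

lemma image_ne_of_rep {k : ℕ} (v : Fin k → β) (j : Fin k)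
    (hrep : ∃ i, i ≠ j ∧ v i = v j) : v '' {i | i ≠ j} = Set.range v := by
  obtain ⟨i0, hi0, hvi0⟩ := hrep
  ext y
  simp only [Set.mem_image, Set.mem_setOf_eq, Set.mem_range]
  constructor
  · rintro ⟨i, _, rfl⟩; exact ⟨i, rfl⟩
  · rintro ⟨i, rfl⟩
    by_cases hij : i = j
    · exact ⟨i0, hi0, by rw [hvi0, hij]⟩
    · exact ⟨i, hij, rfl⟩

lemma image_ne_of_notrep {k : ℕ} (v : Fin k → β) (j : Fin k)
    (hrep : ∀ i, i ≠ j → v i ≠ v j) : v '' {i | i ≠ j} = Set.range v \ {v j} := by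
  ext y
  simp only [Set.mem_image, Set.mem_setOf_eq, Set.mem_diff, Set.mem_range,
    Set.mem_singleton_iff]
  constructor
  · rintro ⟨i, hij, rfl⟩; exact ⟨⟨i, rfl⟩, hrep i hij⟩
  · rintro ⟨⟨i, rfl⟩, hy⟩
    refine ⟨i, fun hij => hy ?_, rfl⟩
    rw [hij]

end RangeUpdate

section Count
open scoped Classical
variable {m : ℕ} [NeZero m]

lemma D_shift {q : ℕ} (hq : q < m) (a y : Fin m) :
    D (a + (q : Fin m)) y = if q ≤ D a y then D a y - q else D a y + m - q := by
  show (y - (a + ((q : ℕ) : Fin m))).val = _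
  have h : y - (a + ((q : ℕ) : Fin m)) = (y - a) - ((q : ℕ) : Fin m) := by ring
  rw [h, subVal, Fin.val_cast_of_lt hq]
  rfl

lemma eq_iff_D {a x : Fin m} {q : ℕ} (hq : q < m) :
    x = a + ((q : ℕ) : Fin m) ↔ D a x = q :=
  ⟨fun h => by rw [h, D_cast hq], fun h => D_inj (by rw [h, D_cast hq])⟩

/-- `v j` has two distinct neighbors among the entries of `v`. -/
def TwoNbrs {k : ℕ} (G : SimpleGraph (Fin m)) (v : Fin k → Fin m) (j : Fin k) : Prop :=
  ∃ i1 i2, G.Adj (v j) (v i1) ∧ G.Adj (v j) (v i2) ∧ v i1 ≠ v i2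

lemma count_lemma (hM : 4 ≤ m) {k : ℕ} (hk : 2 ≤ k) (v : Fin k → Fin m)
    (hcard : (Set.range v).ncard + 2 ≤ m)
    (hv : InducesConnected (cycleGraph m) v) (j : Fin k) :
    Set.ncard {x : Fin m | (cycleGraph m).Adj (v j) x ∧
        InducesConnected (cycleGraph m) (Function.update v j x)} =
      if ∃ i, i ≠ j ∧ v i = v j then 2 else
        if TwoNbrs (cycleGraph m) v j then 0 else 1 := by
  classical
  obtain ⟨a, hS⟩ := structure_lemma hM hv (by omega)
  set t := (Set.range v).ncard with hts
  have htm : t + 2 ≤ m := hcard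
  have hmem : ∀ x, x ∈ Set.range v ↔ D a x < t := fun x => by rw [hS]; exact Iff.rfl
  obtain ⟨p, hpd⟩ : ∃ p, D a (v j) = p := ⟨_, rfl⟩
  have hp : p < t := hpd ▸ (hmem _).mp ⟨j, rfl⟩
  by_cases hrep : ∃ i, i ≠ j ∧ v i = v j
  · rw [if_pos hrep]
    have hT : {x : Fin m | (cycleGraph m).Adj (v j) x ∧
        InducesConnected (cycleGraph m) (Function.update v j x)} =
        {x : Fin m | (cycleGraph m).Adj (v j) x} := by
      ext x
      simp only [Set.mem_setOf_eq, and_iff_left_iff_imp]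
      intro hadj
      show ((cycleGraph m).induce (Set.range (Function.update v j x))).Connected
      rw [range_update_eq, image_ne_of_rep v j hrep, ← Set.union_singleton]
      exact connected_induce_union (Connected.preconnected hv) (induce_singleton_connected x).preconnected ⟨j, rfl⟩ rfl hadj
    rw [hT, nbr_ncard hM]
  · rw [if_neg hrep]
    push_neg at hrep
    have ht2 : 2 ≤ t := by
      haveI : Nontrivial (Fin k) := Fin.nontrivial_iff_two_le.mpr hk
      obtain ⟨i0, hi0⟩ := exists_ne j
      have h2 : 1 < (Set.range v).ncard := (Set.one_lt_ncard_iff (Set.toFinite _)).mpr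
        ⟨v i0, v j, Set.mem_range_self i0, Set.mem_range_self j, hrep i0 hi0⟩
      omega
    have hvj : v j = a + ((p : ℕ) : Fin m) := (eq_iff_D (by omega)).mpr hpd
    -- range of update
    have hrange : ∀ x : Fin m, Set.range (Function.update v j x) =
        insert x (Ival a t \ {a + ((p : ℕ) : Fin m)}) := by
      intro x
      rw [range_update_eq, image_ne_of_notrep v j hrep, hS, hvj]
    have hmemE : ∀ (x y : Fin m),
        y ∈ insert x (Ival a t \ {a + ((p : ℕ) : Fin m)}) ↔
          (y = x ∨ (D a y < t ∧ D a y ≠ p)) := by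
      intro x y
      simp only [Set.mem_insert_iff, Set.mem_diff, mem_Ival_iff, Set.mem_singleton_iff]
      rw [eq_iff_D (by omega : p < m)]
    -- characterize adjacency of arbitrary x to v j
    have hadjx : ∀ x : Fin m, (cycleGraph m).Adj (v j) x ↔
        (p = D a x + 1 ∨ D a x = p + 1 ∨ (p = 0 ∧ D a x = m - 1) ∨
          (D a x = 0 ∧ p = m - 1)) := by
      intro x
      have hx := D_lt a x
      rw [adj_iff_D hM a, hpd]
    by_cases hint : 0 < p ∧ p + 1 < t
    · -- interior: TwoNbrs holds, no good neighbor
      have hTN : TwoNbrs (cycleGraph m) v j := by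
        obtain ⟨i1, hi1⟩ := Set.mem_range.mp ((hmem (a + ((p - 1 : ℕ) : Fin m))).mpr
          (by rw [D_cast (by omega : p - 1 < m)]; omega))
        obtain ⟨i2, hi2⟩ := Set.mem_range.mp ((hmem (a + ((p + 1 : ℕ) : Fin m))).mpr
          (by rw [D_cast (by omega : p + 1 < m)]; omega))
        refine ⟨i1, i2, ?_, ?_, ?_⟩
        · rw [hadjx, hi1, D_cast (by omega : p - 1 < m)]; omega
        · rw [hadjx, hi2, D_cast (by omega : p + 1 < m)]; omega
        · intro h
          rw [hi1, hi2, eq_iff_D (by omega : p + 1 < m),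
            D_cast (by omega : p - 1 < m)] at h
          omega
      rw [if_pos hTN]
      have hT : {x : Fin m | (cycleGraph m).Adj (v j) x ∧
          InducesConnected (cycleGraph m) (Function.update v j x)} = ∅ := by
        ext x
        simp only [Set.mem_setOf_eq, Set.mem_empty_iff_false, iff_false, not_and]
        intro hadj hconn
        have hDx : p = D a x + 1 ∨ D a x = p + 1 := by
          have := (hadjx x).mp hadj
          omega
        show False
        have hconn' : ((cycleGraph m).induce
            (insert x (Ival a t \ {a + ((p : ℕ) : Fin m)}))).Connected := by
          rw [← hrange x]; exact hconn
        refine no_crossing hconn' (fun y => D a y < p) ?_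
          ((hmemE x a).mpr (Or.inr ⟨by rw [D_self]; omega, by rw [D_self]; omega⟩))
          ((hmemE x (a + ((p + 1 : ℕ) : Fin m))).mpr
            (Or.inr ⟨by rw [D_cast (by omega : p + 1 < m)]; omega,
              by rw [D_cast (by omega : p + 1 < m)]; omega⟩))
          (by beta_reduce; rw [D_self]; omega)
          (by beta_reduce; rw [D_cast (by omega : p + 1 < m)]; omega)
        intro y1 hy1 y2 hy2 hadj12
        rw [hmemE] at hy1 hy2
        rw [adj_iff_D hM a] at hadj12
        have c1 : D a y1 < t ∧ D a y1 ≠ p := by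
          rcases hy1 with rfl | h
          · exact ⟨by omega, by omega⟩
          · exact h
        have c2 : D a y2 < t ∧ D a y2 ≠ p := by
          rcases hy2 with rfl | h
          · exact ⟨by omega, by omega⟩
          · exact h
        omega
      rw [hT, Set.ncard_empty]
    · -- boundary: TwoNbrs fails, exactly one good neighbor
      have hTN : ¬ TwoNbrs (cycleGraph m) v j := by
        rintro ⟨i1, i2, h1, h2, hne⟩
        have hm1 : D a (v i1) < t := (hmem _).mp ⟨i1, rfl⟩
        have hm2 : D a (v i2) < t := (hmem _).mp ⟨i2, rfl⟩
        rw [hadjx] at h1 h2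
        have hD12 : D a (v i1) ≠ D a (v i2) := fun h => hne (D_inj h)
        omega
      rw [if_neg hTN]
      by_cases hp0 : p = 0
      · -- left endpoint
        subst hp0
        have hT : {x : Fin m | (cycleGraph m).Adj (v j) x ∧
            InducesConnected (cycleGraph m) (Function.update v j x)} =
            {a + ((1 : ℕ) : Fin m)} := by
          ext x
          simp only [Set.mem_setOf_eq, Set.mem_singleton_iff]
          constructor
          · rintro ⟨hadj, hconn⟩
            have hDx : D a x = 1 ∨ D a x = m - 1 := by
              have := (hadjx x).mp hadj
              omega
            rcases hDx with hDx | hDx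
            · exact (eq_iff_D (by omega)).mpr hDx
            · exfalso
              have hconn' : ((cycleGraph m).induce
                  (insert x (Ival a t \ {a + ((0 : ℕ) : Fin m)}))).Connected := by
                rw [← hrange x]; exact hconn
              refine no_crossing hconn' (fun y => D a y = m - 1) ?_
                ((hmemE x x).mpr (Or.inl rfl))
                ((hmemE x (a + ((1 : ℕ) : Fin m))).mpr
                  (Or.inr ⟨by rw [D_cast (by omega : 1 < m)]; omega,
                    by rw [D_cast (by omega : 1 < m)]; omega⟩))
                hDx
                (by beta_reduce; rw [D_cast (by omega : 1 < m)]; omega)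
              intro y1 hy1 y2 hy2 hadj12
              rw [hmemE] at hy1 hy2
              rw [adj_iff_D hM a] at hadj12
              have l1 := D_lt a y1; have l2 := D_lt a y2
              have c1 : D a y1 = m - 1 ∨ (D a y1 < t ∧ D a y1 ≠ 0) := by
                rcases hy1 with rfl | h
                · exact Or.inl hDx
                · exact Or.inr h
              have c2 : D a y2 = m - 1 ∨ (D a y2 < t ∧ D a y2 ≠ 0) := by
                rcases hy2 with rfl | h
                · exact Or.inl hDx
                · exact Or.inr h
              omega
          · rintro rfl
            constructor
            · rw [hadjx, D_cast (by omega : 1 < m)]; omega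
            · show ((cycleGraph m).induce
                (Set.range (Function.update v j (a + ((1 : ℕ) : Fin m))))).Connected
              rw [hrange]
              have hEq : insert (a + ((1 : ℕ) : Fin m))
                  (Ival a t \ {a + ((0 : ℕ) : Fin m)}) =
                  Ival (a + ((1 : ℕ) : Fin m)) (t - 1) := by
                ext y
                rw [hmemE, mem_Ival_iff, D_shift (by omega : 1 < m),
                  eq_iff_D (by omega : (1:ℕ) < m)]
                have := D_lt a y
                split <;> omega
              rw [hEq]
              exact Ival_connected hM _ (t - 1) (by omega) (by omega)
        rw [hT, Set.ncard_singleton]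
      · -- right endpoint : p + 1 = t
        have hpt : p + 1 = t := by omega
        have hT : {x : Fin m | (cycleGraph m).Adj (v j) x ∧
            InducesConnected (cycleGraph m) (Function.update v j x)} =
            {a + ((p - 1 : ℕ) : Fin m)} := by
          ext x
          simp only [Set.mem_setOf_eq, Set.mem_singleton_iff]
          constructor
          · rintro ⟨hadj, hconn⟩
            have hDx : D a x = p - 1 ∨ D a x = p + 1 := by
              have := (hadjx x).mp hadj
              omega
            rcases hDx with hDx | hDx
            · exact (eq_iff_D (by omega)).mpr hDx
            · exfalso
              have hconn' : ((cycleGraph m).induce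
                  (insert x (Ival a t \ {a + ((p : ℕ) : Fin m)}))).Connected := by
                rw [← hrange x]; exact hconn
              refine no_crossing hconn' (fun y => D a y = p + 1) ?_
                ((hmemE x x).mpr (Or.inl rfl))
                ((hmemE x a).mpr (Or.inr ⟨by rw [D_self]; omega, by rw [D_self]; omega⟩))
                hDx
                (by beta_reduce; rw [D_self]; omega)
              intro y1 hy1 y2 hy2 hadj12
              rw [hmemE] at hy1 hy2
              rw [adj_iff_D hM a] at hadj12
              have l1 := D_lt a y1; have l2 := D_lt a y2
              have c1 : D a y1 = p + 1 ∨ (D a y1 < t ∧ D a y1 ≠ p) := by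
                rcases hy1 with rfl | h
                · exact Or.inl hDx
                · exact Or.inr h
              have c2 : D a y2 = p + 1 ∨ (D a y2 < t ∧ D a y2 ≠ p) := by
                rcases hy2 with rfl | h
                · exact Or.inl hDx
                · exact Or.inr h
              omega
          · rintro rfl
            constructor
            · rw [hadjx, D_cast (by omega : p - 1 < m)]; omega
            · show ((cycleGraph m).induce
                (Set.range (Function.update v j (a + ((p - 1 : ℕ) : Fin m))))).Connected
              rw [hrange]
              have hEq : insert (a + ((p - 1 : ℕ) : Fin m))
                  (Ival a t \ {a + ((p : ℕ) : Fin m)}) = Ival a (t - 1) := by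
                ext y
                rw [hmemE, mem_Ival_iff, eq_iff_D (by omega : p - 1 < m)]
                omega
              rw [hEq]
              exact Ival_connected hM a (t - 1) (by omega) (by omega)
        rw [hT, Set.ncard_singleton]

end Count

theorem cycle_local_neighbors_atomic_type (k m : ℕ) (hk : 2 ≤ k) (hm : k + 2 ≤ m) :
    (∀ v : Fin k → Fin m, InducesConnected (cycleGraph m) v →
      ∀ j : Fin k,
        Set.ncard {x : Fin m | (cycleGraph m).Adj (v j) x} = 2) ∧
    (∀ v w : Fin k → Fin m, InducesConnected (cycleGraph m) v →
      InducesConnected (cycleGraph m) w →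
      SameAtomicType (cycleGraph m) (cycleGraph m) v w →
      ∀ j : Fin k,
        Set.ncard {x : Fin m | (cycleGraph m).Adj (v j) x ∧
            InducesConnected (cycleGraph m) (Function.update v j x)} =
        Set.ncard {x : Fin m | (cycleGraph m).Adj (w j) x ∧
            InducesConnected (cycleGraph m) (Function.update w j x)}) := by
  haveI : NeZero m := ⟨by omega⟩
  have hM : 4 ≤ m := by omega
  have hcard : ∀ v : Fin k → Fin m, (Set.range v).ncard + 2 ≤ m := by
    intro v
    have h1 : (Set.range v).ncard ≤ k := by
      rw [← Set.image_univ]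
      refine le_trans (Set.ncard_image_le (Set.toFinite _)) ?_
      rw [Set.ncard_univ, Nat.card_eq_fintype_card, Fintype.card_fin]
    omega
  constructor
  · intro v _ j
    exact nbr_ncard hM (v j)
  · intro v w hv hw hat j
    have hrep : (∃ i, i ≠ j ∧ v i = v j) ↔ (∃ i, i ≠ j ∧ w i = w j) := by
      constructor
      · rintro ⟨i, hij, h⟩; exact ⟨i, hij, (hat i j).1.mp h⟩
      · rintro ⟨i, hij, h⟩; exact ⟨i, hij, (hat i j).1.mpr h⟩
    have hTN : TwoNbrs (cycleGraph m) v j ↔ TwoNbrs (cycleGraph m) w j := by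
      constructor
      · rintro ⟨i1, i2, h1, h2, hne⟩
        exact ⟨i1, i2, (hat j i1).2.mp h1, (hat j i2).2.mp h2,
          fun h => hne ((hat i1 i2).1.mpr h)⟩
      · rintro ⟨i1, i2, h1, h2, hne⟩
        exact ⟨i1, i2, (hat j i1).2.mpr h1, (hat j i2).2.mpr h2,
          fun h => hne ((hat i1 i2).1.mp h)⟩
    rw [count_lemma hM hk v (hcard v) hv j, count_lemma hM hk w (hcard w) hw j]
    simp only [hrep]
    by_cases h1 : ∃ i, i ≠ j ∧ w i = w j
    · simp [h1]
    · by_cases h2 : TwoNbrs (cycleGraph m) w j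
      · have h3 : TwoNbrs (cycleGraph m) v j := hTN.mpr h2
        simp [h1, h2, h3]
      · have h3 : ¬ TwoNbrs (cycleGraph m) v j := fun hh => h2 (hTN.mp hh)
        simp [h1, h2, h3]
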